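/- Let F be a field and let A, B be elements of SL(2, F). Then tr(A)^2 + tr(B)^2 + tr(AB)^2 − tr(A)·tr(B)·tr(AB) − 2 = tr(A B A⁻¹ B⁻¹). -/
import Mathlib

theorem fricke_identity (F : Type*) [Field F]
    (A B : Matrix.SpecialLinearGroup (Fin 2) F) :
    Matrix.trace (A : Matrix (Fin 2) (Fin 2) F) ^ 2 +
      Matrix.trace (B : Matrix (Fin 2) (Fin 2) F) ^ 2 +
      Matrix.trace ((A * B : Matrix.SpecialLinearGroup (Fin 2) F) : Matrix (Fin 2) (Fin 2) F) ^ 2 -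
      Matrix.trace (A : Matrix (Fin 2) (Fin 2) F) *
        Matrix.trace (B : Matrix (Fin 2) (Fin 2) F) *
        Matrix.trace ((A * B : Matrix.SpecialLinearGroup (Fin 2) F) : Matrix (Fin 2) (Fin 2) F) -
      2 =
    Matrix.trace ((A * B * A⁻¹ * B⁻¹ : Matrix.SpecialLinearGroup (Fin 2) F) :
      Matrix (Fin 2) (Fin 2) F) := by
  have hA : (A : Matrix (Fin 2) (Fin 2) F).det = 1 := A.2
  have hB : (B : Matrix (Fin 2) (Fin 2) F).det = 1 := B.2
  rw [Matrix.det_fin_two] at hA hB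
  simp only [Matrix.SpecialLinearGroup.coe_mul, Matrix.SpecialLinearGroup.coe_inv,
    Matrix.adjugate_fin_two, Matrix.trace_fin_two, Matrix.mul_apply, Fin.sum_univ_two,
    Matrix.of_apply, Matrix.cons_val', Matrix.cons_val_zero, Matrix.cons_val_one,
    Matrix.head_cons, Matrix.empty_val', Matrix.cons_val_fin_one, Matrix.head_fin_const]
  linear_combination (2 - ((B : Matrix (Fin 2) (Fin 2) F) 0 0 + (B : Matrix (Fin 2) (Fin 2) F) 1 1)^2) * hA +
    (2*((A : Matrix (Fin 2) (Fin 2) F) 0 0 * (A : Matrix (Fin 2) (Fin 2) F) 1 1 - (A : Matrix (Fin 2) (Fin 2) F) 0 1 * (A : Matrix (Fin 2) (Fin 2) F) 1 0) - ((A : Matrix (Fin 2) (Fin 2) F) 0 0 + (A : Matrix (Fin 2) (Fin 2) F) 1 1)^2) * hB
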